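/- (Correctness of the Kronecker-based cancellation vector.) Let K ≥ 1 and n_1,...,n_K be integers with n_j ≥ 2, set N = n_1·n_2···n_K, let Θ_1, ..., Θ_K ∈ ℝ, and choose integers ℓ_1, ..., ℓ_K with 1 ≤ ℓ_j ≤ n_j − 1. Define the cancellation vector s ∈ ℂ^N by s_{ι(c)} = Π_{j=1}^{K} exp(−2πi·ℓ_j·c_j / n_j) · exp(−i·m_j·c_j·Θ_j) for every digit tuple c. Then s simultaneously zero-forces all K steering vectors: for every k = 1, ..., K, Σ_{r=0}^{N−1} s_r · exp(i·r·Θ_k) = 0, i.e., sᵀ · v(Θ_k) = 0. -/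

import Mathlib

lemma root_sum_zero (n ℓ : ℕ) (hn : 2 ≤ n) (hℓ1 : 1 ≤ ℓ) (hℓ2 : ℓ ≤ n - 1) :
    ∑ c : Fin n, Complex.exp (-2 * Real.pi * Complex.I * (ℓ : ℂ) * (c : ℂ) / (n : ℂ)) = 0 := by
  set ζ : ℂ := Complex.exp (-2 * Real.pi * Complex.I * (ℓ : ℂ) / (n : ℂ)) with hζ
  have hterm : ∀ c : ℕ,
      Complex.exp (-2 * Real.pi * Complex.I * (ℓ : ℂ) * (c : ℂ) / (n : ℂ)) = ζ ^ c := by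
    intro c
    rw [hζ, ← Complex.exp_nat_mul]
    ring_nf
  have hζn : ζ ^ n = 1 := by
    rw [hζ, ← Complex.exp_nat_mul]
    have hn0 : (n : ℂ) ≠ 0 := by exact_mod_cast (by omega : n ≠ 0)
    have : (n : ℂ) * (-2 * Real.pi * Complex.I * (ℓ : ℂ) / (n : ℂ))
        = ((-ℓ : ℤ) : ℂ) * (2 * Real.pi * Complex.I) := by
      field_simp
      simp
    rw [this, Complex.exp_int_mul_two_pi_mul_I]
  have hζ1 : ζ ≠ 1 := by
    intro h
    rw [hζ, Complex.exp_eq_one_iff] at h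
    obtain ⟨m, hm⟩ := h
    have h2πI : (2 : ℂ) * Real.pi * Complex.I ≠ 0 := by
      simp [Real.pi_ne_zero, Complex.I_ne_zero]
    have hn0 : (n : ℂ) ≠ 0 := by exact_mod_cast (by omega : n ≠ 0)
    field_simp at hm
    have hmn : ((-ℓ : ℤ) : ℂ) * (2 * Real.pi * Complex.I) = ((m * n : ℤ) : ℂ) * (2 * Real.pi * Complex.I) := by
      push_cast
      linear_combination (2 * Real.pi * Complex.I) * hm
    have hmn' : (-(ℓ:ℤ)) = m * n := by exact_mod_cast mul_right_cancel₀ h2πI hmn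
    have hd : (n : ℤ) ∣ (ℓ : ℤ) := ⟨-m, by linear_combination -hmn'⟩
    have hle : (n : ℤ) ≤ (ℓ : ℤ) := Int.le_of_dvd (by exact_mod_cast hℓ1) hd
    have : n ≤ ℓ := by exact_mod_cast hle
    omega
  calc ∑ c : Fin n, Complex.exp (-2 * Real.pi * Complex.I * (ℓ : ℂ) * (c : ℂ) / (n : ℂ))
      = ∑ c ∈ Finset.range n, ζ ^ c := by
        rw [← Fin.sum_univ_eq_sum_range (fun c => ζ ^ c) n]
        exact Finset.sum_congr rfl fun c _ => hterm c
    _ = (ζ ^ n - 1) / (ζ - 1) := geom_sum_eq hζ1 n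
    _ = 0 := by rw [hζn]; simp


/-- Correctness of the Kronecker-based cancellation vector. The vector `s`
with entries `s_{ι(c)} = Π_j exp(-2πi ℓ_j c_j / n_j) · exp(-i m_j c_j Θ_j)` zero-forces
every steering vector `v(Θ_k)`: summing over all digit tuples `c` (equivalently over all
indices `r = ι(c) ∈ {0,...,N-1}`), `Σ_c s_{ι(c)} · exp(i ι(c) Θ_k) = 0`. -/
theorem kronecker_cancellation_vector_zero_forces (K : ℕ) (hK : 1 ≤ K)
    (n : Fin K → ℕ) (hn : ∀ j, 2 ≤ n j) (Θ : Fin K → ℝ)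
    (ℓ : Fin K → ℕ) (hℓ1 : ∀ j, 1 ≤ ℓ j) (hℓ2 : ∀ j, ℓ j ≤ n j - 1) (k : Fin K) :
    ∑ c : (∀ j : Fin K, Fin (n j)),
      (∏ j, Complex.exp (-2 * Real.pi * Complex.I * (ℓ j : ℂ) * ((c j).val : ℂ) / (n j : ℂ)) *
        Complex.exp (-((∏ j' ∈ Finset.Iio j, n j' : ℕ) : ℂ) * ((c j).val : ℂ) *
          (Θ j : ℂ) * Complex.I)) *
      Complex.exp (((∑ j, (∏ j' ∈ Finset.Iio j, n j') * (c j).val : ℕ) : ℂ) *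
        (Θ k : ℂ) * Complex.I) = 0 := by
  classical
  set m : Fin K → ℕ := fun j => ∏ j' ∈ Finset.Iio j, n j' with hm
  set G : ∀ j : Fin K, Fin (n j) → ℂ := fun j c =>
    Complex.exp (-2 * Real.pi * Complex.I * (ℓ j : ℂ) * (c.val : ℂ) / (n j : ℂ)) *
      Complex.exp (-((m j : ℕ) : ℂ) * (c.val : ℂ) * (Θ j : ℂ) * Complex.I) *
      Complex.exp (((m j * c.val : ℕ) : ℂ) * (Θ k : ℂ) * Complex.I) with hG
  have step1 : ∀ c : (∀ j : Fin K, Fin (n j)),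
      (∏ j, Complex.exp (-2 * Real.pi * Complex.I * (ℓ j : ℂ) * ((c j).val : ℂ) / (n j : ℂ)) *
        Complex.exp (-((m j : ℕ) : ℂ) * ((c j).val : ℂ) * (Θ j : ℂ) * Complex.I)) *
      Complex.exp (((∑ j, m j * (c j).val : ℕ) : ℂ) * (Θ k : ℂ) * Complex.I)
      = ∏ j, G j (c j) := by
    intro c
    have hexp : Complex.exp (((∑ j, m j * (c j).val : ℕ) : ℂ) * (Θ k : ℂ) * Complex.I)
        = ∏ j, Complex.exp (((m j * (c j).val : ℕ) : ℂ) * (Θ k : ℂ) * Complex.I) := by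
      rw [← Complex.exp_sum]
      congr 1
      push_cast
      rw [Finset.sum_mul, Finset.sum_mul]
    rw [hexp, ← Finset.prod_mul_distrib]
  calc ∑ c : (∀ j : Fin K, Fin (n j)),
      (∏ j, Complex.exp (-2 * Real.pi * Complex.I * (ℓ j : ℂ) * ((c j).val : ℂ) / (n j : ℂ)) *
        Complex.exp (-((m j : ℕ) : ℂ) * ((c j).val : ℂ) * (Θ j : ℂ) * Complex.I)) *
      Complex.exp (((∑ j, m j * (c j).val : ℕ) : ℂ) * (Θ k : ℂ) * Complex.I)
      = ∑ c : (∀ j : Fin K, Fin (n j)), ∏ j, G j (c j) :=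
        Finset.sum_congr rfl fun c _ => step1 c
    _ = ∏ j, ∑ c : Fin (n j), G j c := by
        rw [Finset.prod_univ_sum]
        simp [Fintype.piFinset_univ]
    _ = 0 := by
        apply Finset.prod_eq_zero (Finset.mem_univ k)
        have hGk : ∀ c : Fin (n k),
            G k c = Complex.exp (-2 * Real.pi * Complex.I * (ℓ k : ℂ) * (c.val : ℂ) / (n k : ℂ)) := by
          intro c
          rw [hG]
          simp only
          rw [mul_assoc, ← Complex.exp_add]
          have : -((m k : ℕ) : ℂ) * (c.val : ℂ) * (Θ k : ℂ) * Complex.I +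
              ((m k * c.val : ℕ) : ℂ) * (Θ k : ℂ) * Complex.I = 0 := by
            push_cast; ring
          rw [this, Complex.exp_zero, mul_one]
        rw [Finset.sum_congr rfl fun c _ => hGk c]
        exact root_sum_zero (n k) (ℓ k) (hn k) (hℓ1 k) (hℓ2 k)
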